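/- Let W₀ be a real Banach space, W₁ a reflexive real Banach space, and ι : W₁ → W₀ an injective compact continuous linear map. Let A ⊆ ℝ^n be compact, and let B : A × W₀ → W₀ be continuous such that for some constant 0 < ρ < 1 one has ‖B(a,w) − B(a,w′)‖ ≤ ρ‖w − w′‖ for all a ∈ A and w, w′ ∈ W₀. Suppose (a_k, w_k) is a sequence in A × W₀ such that for every k there exists u_k ∈ W₁ with w_k − B(a_k, w_k) = ι(u_k) and sup_k ‖u_k‖_{W₁} < ∞. Then (a_k, w_k) possesses a subsequence converging in ℝ^n × W₀ to a point (a, w) ∈ A × W₀ with w − B(a, w) ∈ ι(W₁). (Analytic core of the Local Compactness Theorem, Theorem 4.5.) -/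

import Mathlib

open NormedSpace Metric Set Pointwise

/-- Image of a closed ball under a continuous linear map from a reflexive space is closed. -/
lemma image_closedBall_isClosed
    (W₀ W₁ : Type*)
    [NormedAddCommGroup W₀] [NormedSpace ℝ W₀]
    [NormedAddCommGroup W₁] [NormedSpace ℝ W₁] [CompleteSpace W₁]
    (hrefl : Function.Surjective (NormedSpace.inclusionInDoubleDual ℝ W₁))
    (ι : W₁ →L[ℝ] W₀) (M : ℝ) :
    IsClosed (ι '' Metric.closedBall 0 M) := by
  classical
  set J := NormedSpace.inclusionInDoubleDual ℝ W₁ with hJ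
  have hJnorm : ∀ x : W₁, ‖J x‖ = ‖x‖ := fun x =>
    (NormedSpace.inclusionInDoubleDualLi ℝ (E := W₁)).norm_map x
  have hJinj : Function.Injective J := by
    intro x y hxy
    have : ‖x - y‖ = 0 := by
      rw [← hJnorm, map_sub, hxy, sub_self, ← map_zero J, hJnorm, norm_zero]
    simpa [sub_eq_zero] using norm_eq_zero.mp this
  set Jinv : StrongDual ℝ (StrongDual ℝ W₁) → W₁ := Function.surjInv hrefl with hJinvdef
  have hJJinv : ∀ Φ, J (Jinv Φ) = Φ := fun Φ => Function.surjInv_eq hrefl Φ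
  -- the map g : WeakDual → WeakSpace W₀
  set g : WeakDual ℝ (StrongDual ℝ W₁) → WeakSpace ℝ W₀ :=
    fun Φ => toWeakSpaceCLM ℝ W₀ (ι (Jinv (WeakDual.toStrongDual Φ))) with hg
  have hgcont : Continuous g := by
    apply WeakBilin.continuous_of_continuous_eval
    intro y
    have : (fun Φ : WeakDual ℝ (StrongDual ℝ W₁) =>
        (topDualPairing ℝ W₀).flip (g Φ) y) =
        fun Φ : WeakDual ℝ (StrongDual ℝ W₁) => Φ (y.comp ι) := by
      funext Φ
      have h1 : (topDualPairing ℝ W₀).flip (g Φ) y = y (ι (Jinv (WeakDual.toStrongDual Φ))) := rfl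
      have h2 : y (ι (Jinv (WeakDual.toStrongDual Φ)))
          = (y.comp ι) (Jinv (WeakDual.toStrongDual Φ)) := rfl
      have h3 : (y.comp ι) (Jinv (WeakDual.toStrongDual Φ))
          = (J (Jinv (WeakDual.toStrongDual Φ))) (y.comp ι) := rfl
      rw [h1, h2, h3, hJJinv]
      rfl
    rw [this]
    exact WeakBilin.eval_continuous _ _
  -- Banach-Alaoglu
  have hM' : M < 0 ∨ 0 ≤ M := lt_or_ge M 0 |>.imp id id
  set K : Set (WeakDual ℝ (StrongDual ℝ W₁)) :=
    WeakDual.toStrongDual ⁻¹' Metric.closedBall 0 M with hK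
  have hKcpt : IsCompact K := WeakDual.isCompact_closedBall (𝕜 := ℝ) (0 : StrongDual ℝ (StrongDual ℝ W₁)) M
  have hgK : IsCompact (g '' K) := hKcpt.image hgcont
  -- T2 on WeakSpace ℝ W₀
  have hsep : Function.Injective ((topDualPairing ℝ W₀).flip) := by
    intro x y hxy
    apply (NormedSpace.eq_iff_forall_dual_eq ℝ).mpr
    intro f
    have := congrArg (fun z => z f) hxy
    exact this
  haveI : T2Space (WeakSpace ℝ W₀) := (WeakBilin.isEmbedding hsep).t2Space
  have hclosed : IsClosed (g '' K) := hgK.isClosed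
  -- identify the image
  have himg : toWeakSpaceCLM ℝ W₀ ⁻¹' (g '' K) = ι '' Metric.closedBall 0 M := by
    ext x
    simp only [Set.mem_preimage, Set.mem_image]
    constructor
    · rintro ⟨Φ, hΦ, hΦx⟩
      refine ⟨Jinv (WeakDual.toStrongDual Φ), ?_, ?_⟩
      · have : ‖Jinv (WeakDual.toStrongDual Φ)‖ = ‖WeakDual.toStrongDual Φ‖ := by
          rw [← hJnorm, hJJinv]
        simp only [Metric.mem_closedBall, dist_zero_right, this]
        have := hΦ
        simp only [hK, Set.mem_preimage, Metric.mem_closedBall, dist_zero_right] at this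
        exact (dist_zero_right (WeakDual.toStrongDual Φ)).symm.trans_le this
      · exact (toWeakSpaceCLM_bijective (𝕜 := ℝ) (E := W₀)).injective hΦx
    · rintro ⟨v, hv, hvx⟩
      refine ⟨WeakDual.toStrongDual.symm (J v), ?_, ?_⟩
      · simp only [hK, Set.mem_preimage, Metric.mem_closedBall, dist_zero_right]
        have : WeakDual.toStrongDual (WeakDual.toStrongDual.symm (J v)) = J v :=
          WeakDual.toStrongDual.apply_symm_apply _
        rw [this]; refine (dist_zero_right (J v)).trans_le ?_; rw [hJnorm]
        simpa [Metric.mem_closedBall, dist_zero_right] using hv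
      · have heq : WeakDual.toStrongDual (WeakDual.toStrongDual.symm (J v)) = J v :=
          WeakDual.toStrongDual.apply_symm_apply _
        simp only [hg]
        rw [heq]
        have : Jinv (J v) = v := hJinj (hJJinv (J v))
        rw [this, hvx]
  rw [← himg]
  exact hclosed.preimage (toWeakSpaceCLM ℝ W₀).continuous

/-- analytic core of the Local Compactness Theorem (Theorem 4.5). -/
theorem local_compactness_core
    (n : ℕ) (W₀ W₁ : Type*)
    [NormedAddCommGroup W₀] [NormedSpace ℝ W₀] [CompleteSpace W₀]
    [NormedAddCommGroup W₁] [NormedSpace ℝ W₁] [CompleteSpace W₁]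
    -- W₁ is reflexive
    (hrefl : Function.Surjective (NormedSpace.inclusionInDoubleDual ℝ W₁))
    -- ι : W₁ → W₀ is an injective compact continuous linear map
    (ι : W₁ →L[ℝ] W₀) (hinj : Function.Injective (⇑ι)) (hcpt : IsCompactOperator (⇑ι))
    (A : Set (Fin n → ℝ)) (hA : IsCompact A)
    (B : (Fin n → ℝ) → W₀ → W₀)
    (hBcont : ContinuousOn (fun p : (Fin n → ℝ) × W₀ => B p.1 p.2) (A ×ˢ Set.univ))
    (ρ : ℝ) (hρ0 : 0 < ρ) (hρ1 : ρ < 1)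
    (hcontr : ∀ a ∈ A, ∀ w w' : W₀, ‖B a w - B a w'‖ ≤ ρ * ‖w - w'‖)
    (a : ℕ → Fin n → ℝ) (ha : ∀ k, a k ∈ A) (w : ℕ → W₀) (u : ℕ → W₁)
    (hu : ∀ k, w k - B (a k) (w k) = ι (u k))
    (M : ℝ) (hM : ∀ k, ‖u k‖ ≤ M) :
    ∃ φ : ℕ → ℕ, StrictMono φ ∧ ∃ (aLim : Fin n → ℝ) (wLim : W₀), aLim ∈ A ∧
      Filter.Tendsto (fun k => (a (φ k), w (φ k))) Filter.atTop (nhds (aLim, wLim)) ∧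
      wLim - B aLim wLim ∈ Set.range (⇑ι) := by
  classical
  have hM0 : 0 ≤ M := le_trans (norm_nonneg (u 0)) (hM 0)
  -- Step 1: subsequence with a converging in A
  obtain ⟨aLim, haA, φ₁, hφ₁, haconv⟩ := hA.tendsto_subseq ha
  -- Step 2: the ι(u k) live in a compact set
  obtain ⟨K₀, hK₀cpt, hK₀nhds⟩ := hcpt
  obtain ⟨ε, hε, hball⟩ := Metric.mem_nhds_iff.mp hK₀nhds
  set t : ℝ := (M + 1) * (2 / ε) with ht
  have htpos : 0 < t := mul_pos (by linarith) (by positivity)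
  have hmem : ∀ k, ι (u k) ∈ t • K₀ := by
    intro k
    have h1 : ‖t⁻¹ • u k‖ < ε := by
      rw [norm_smul, norm_inv, Real.norm_eq_abs, abs_of_pos htpos]
      have h2 : ‖u k‖ ≤ M := hM k
      have h3 : t⁻¹ * ‖u k‖ ≤ t⁻¹ * M := by
        apply mul_le_mul_of_nonneg_left h2 (inv_nonneg.mpr htpos.le)
      calc t⁻¹ * ‖u k‖ ≤ t⁻¹ * M := h3
        _ < ε := by
          rw [← div_eq_inv_mul, div_lt_iff₀ htpos, ht]
          have hεne : ε ≠ 0 := hε.ne'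
          have h2ε : ε * ((M + 1) * (2 / ε)) = 2 * (M + 1) := by
            field_simp
          rw [h2ε]; linarith
    have h4 : t⁻¹ • u k ∈ ι ⁻¹' K₀ := hball (by simpa [Metric.mem_ball, dist_zero_right] using h1)
    have h5 : ι (t⁻¹ • u k) ∈ K₀ := h4
    refine ⟨ι (t⁻¹ • u k), h5, ?_⟩
    show t • ι (t⁻¹ • u k) = ι (u k)
    rw [map_smul, smul_smul, mul_inv_cancel₀ htpos.ne', one_smul]
  have htK : IsCompact (t • K₀) := hK₀cpt.smul t
  obtain ⟨v, hvmem, φ₂, hφ₂, hvconv⟩ := htK.tendsto_subseq (fun k => hmem (φ₁ k))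
  set φ : ℕ → ℕ := φ₁ ∘ φ₂ with hφdef
  have hφ : StrictMono φ := hφ₁.comp hφ₂
  have haconv' : Filter.Tendsto (fun k => a (φ k)) Filter.atTop (nhds aLim) :=
    haconv.comp (hφ₂.tendsto_atTop)
  have hvconv' : Filter.Tendsto (fun k => ι (u (φ k))) Filter.atTop (nhds v) := hvconv
  -- Step 3: v ∈ ι '' closedBall 0 M
  have hSclosed : IsClosed (ι '' Metric.closedBall 0 M) :=
    image_closedBall_isClosed W₀ W₁ hrefl ι M
  have hvS : v ∈ ι '' Metric.closedBall 0 M := by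
    apply hSclosed.mem_of_tendsto hvconv'
    exact Filter.Eventually.of_forall fun k =>
      ⟨u (φ k), by simpa [Metric.mem_closedBall, dist_zero_right] using hM (φ k), rfl⟩
  obtain ⟨uInf, _, huInf⟩ := hvS
  -- Step 4: fixed point wLim of T w = B aLim w + v
  set T : W₀ → W₀ := fun x => B aLim x + v with hT
  have hTlip : LipschitzWith ⟨ρ, hρ0.le⟩ T := by
    apply LipschitzWith.of_dist_le_mul
    intro x y
    simp only [hT, dist_eq_norm]
    have : B aLim x + v - (B aLim y + v) = B aLim x - B aLim y := by abel
    rw [this]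
    exact hcontr aLim haA x y
  have hTcontr : ContractingWith ⟨ρ, hρ0.le⟩ T := ⟨by exact_mod_cast hρ1, hTlip⟩
  set wLim : W₀ := hTcontr.fixedPoint T with hwLimdef
  have hfix : T wLim = wLim := hTcontr.fixedPoint_isFixedPt
  have hfix' : B aLim wLim + v = wLim := hfix
  -- Step 5: w ∘ φ → wLim
  have hwrep : ∀ k, w k = B (a k) (w k) + ι (u k) := fun k =>
    (eq_add_of_sub_eq (hu k)).trans (add_comm _ _)
  have hbound : ∀ k, ‖w (φ k) - wLim‖ ≤
      (‖B (a (φ k)) wLim - B aLim wLim‖ + ‖ι (u (φ k)) - v‖) / (1 - ρ) := by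
    intro k
    have h1 : w (φ k) - wLim = (B (a (φ k)) (w (φ k)) + ι (u (φ k))) - (B aLim wLim + v) := by
      rw [← hwrep (φ k), hfix']
    have h2 : ‖w (φ k) - wLim‖ ≤ ρ * ‖w (φ k) - wLim‖ +
        (‖B (a (φ k)) wLim - B aLim wLim‖ + ‖ι (u (φ k)) - v‖) := by
      calc ‖w (φ k) - wLim‖
          = ‖(B (a (φ k)) (w (φ k)) - B (a (φ k)) wLim)
            + ((B (a (φ k)) wLim - B aLim wLim) + (ι (u (φ k)) - v))‖ := by
            rw [h1]; congr 1; abel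
        _ ≤ ‖B (a (φ k)) (w (φ k)) - B (a (φ k)) wLim‖
            + ‖(B (a (φ k)) wLim - B aLim wLim) + (ι (u (φ k)) - v)‖ := norm_add_le _ _
        _ ≤ ρ * ‖w (φ k) - wLim‖ +
            (‖B (a (φ k)) wLim - B aLim wLim‖ + ‖ι (u (φ k)) - v‖) := by
            gcongr
            · exact hcontr (a (φ k)) (ha (φ k)) _ _
            · exact norm_add_le _ _
    rw [le_div_iff₀ (by linarith)]
    nlinarith [norm_nonneg (w (φ k) - wLim)]
  have hεconv : Filter.Tendsto
      (fun k => (‖B (a (φ k)) wLim - B aLim wLim‖ + ‖ι (u (φ k)) - v‖) / (1 - ρ))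
      Filter.atTop (nhds 0) := by
    have hB0 : Filter.Tendsto (fun k => B (a (φ k)) wLim) Filter.atTop (nhds (B aLim wLim)) := by
      have hc := hBcont (aLim, wLim) ⟨haA, Set.mem_univ _⟩
      have hseq : Filter.Tendsto (fun k => ((a (φ k), wLim) : (Fin n → ℝ) × W₀)) Filter.atTop
          (nhdsWithin (aLim, wLim) (A ×ˢ Set.univ)) := by
        apply tendsto_nhdsWithin_of_tendsto_nhds_of_eventually_within
        · exact haconv'.prodMk_nhds tendsto_const_nhds
        · exact Filter.Eventually.of_forall fun k => ⟨ha (φ k), Set.mem_univ _⟩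
      exact hc.tendsto.comp hseq
    have h1 : Filter.Tendsto (fun k => ‖B (a (φ k)) wLim - B aLim wLim‖)
        Filter.atTop (nhds 0) := tendsto_iff_norm_sub_tendsto_zero.mp hB0
    have h2 : Filter.Tendsto (fun k => ‖ι (u (φ k)) - v‖) Filter.atTop (nhds 0) :=
      tendsto_iff_norm_sub_tendsto_zero.mp hvconv'
    have := (h1.add h2).div_const (1 - ρ)
    simpa using this
  have hwconv : Filter.Tendsto (fun k => w (φ k)) Filter.atTop (nhds wLim) := by
    rw [tendsto_iff_norm_sub_tendsto_zero]
    exact squeeze_zero (fun k => norm_nonneg _) hbound hεconv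
  refine ⟨φ, hφ, aLim, wLim, haA, haconv'.prodMk_nhds hwconv, ?_⟩
  have hv : v = wLim - B aLim wLim := eq_sub_of_add_eq (by rw [add_comm]; exact hfix')
  rw [← hv, ← huInf]
  exact Set.mem_range_self _
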